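/- Let ω, κ_p, κ_s > 0 and fix y ∈ ℝ³. Let Φ(x,y) = (κ_s²/(4πω²))(e^{iκ_s‖x−y‖}/‖x−y‖) I + (1/(4πω²)) ∇_x∇_xᵀ[ e^{iκ_s‖x−y‖}/‖x−y‖ − e^{iκ_p‖x−y‖}/‖x−y‖ ]. Then there exist constants C > 0 and R₀ > 0 such that for all x ∈ ℝ³ with ‖x‖ ≥ R₀, writing x̂ = x/‖x‖, every entry of the matrix Φ(x,y) − [ (κ_p²/(4πω²)) (e^{iκ_p‖x‖}/‖x‖) x̂ x̂ᵀ e^{−iκ_p x̂·y} + (κ_s²/(4πω²)) (e^{iκ_s‖x‖}/‖x‖) (I − x̂ x̂ᵀ) e^{−iκ_s x̂·y} ] has modulus at most C/‖x‖². -/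

import Mathlib

open Real Metric

noncomputable section

/-- The Euclidean space `ℝ³`. -/
abbrev E3 := EuclideanSpace ℝ (Fin 3)

/-- Complex 3-vectors. -/
abbrev V3 := Fin 3 → ℂ

/-- The `j`-th standard basis vector of `ℝ³`. -/
def e3 (j : Fin 3) : E3 := EuclideanSpace.single j 1

/-- The `j`-th partial derivative of a scalar field `f : ℝ³ → ℂ`. -/
def pd (j : Fin 3) (f : E3 → ℂ) : E3 → ℂ := fun x => fderiv ℝ f x (e3 j)

/-- The componentwise Laplacian of a vector field `u : ℝ³ → ℂ³`. -/
def vecLap (u : E3 → V3) : E3 → V3 := fun x i => ∑ j, pd j (pd j (fun y => u y i)) x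

/-- The divergence `∇·u` of a vector field `u : ℝ³ → ℂ³`. -/
def divg (u : E3 → V3) : E3 → ℂ := fun x => ∑ j, pd j (fun y => u y j) x

/-- The gradient `∇f` of a scalar field `f : ℝ³ → ℂ`. -/
def grad (f : E3 → ℂ) : E3 → V3 := fun x j => pd j f x

/-- `u` satisfies the Navier equation `μ Δu + (λ+μ) ∇(∇·u) + ω² u = 0` at the point `x`. -/
def IsNavierSolutionAt (μ lam ω : ℝ) (u : E3 → V3) (x : E3) : Prop :=
  μ • vecLap u x + (lam + μ) • grad (divg u) x + ω ^ 2 • u x = 0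

/-- The kernel `g_κ(x) = e^{iκ‖x−y‖}/‖x−y‖`. -/
def gker (κ : ℝ) (y : E3) (x : E3) : ℂ :=
  Complex.exp (Complex.I * (κ : ℂ) * (‖x - y‖ : ℂ)) / ((‖x - y‖ : ℝ) : ℂ)

/-- The Kupradze fundamental solution
`Φ(x,y) = (κ_s²/(4πω²)) g_{κ_s}(x−y) I + (1/(4πω²)) Hess_x[g_{κ_s} − g_{κ_p}](x−y)`. -/
def PhiMat (ω κp κs : ℝ) (y x : E3) (j k : Fin 3) : ℂ :=
  ((κs ^ 2 / (4 * π * ω ^ 2) : ℝ) : ℂ) * gker κs y x * (if j = k then 1 else 0)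
    + ((1 / (4 * π * ω ^ 2) : ℝ) : ℂ)
      * pd j (pd k (fun z => gker κs y z - gker κp y z)) x

/-- The far-field approximation of the fundamental solution:
`(κ_p²/(4πω²)) (e^{iκ_p‖x‖}/‖x‖) x̂x̂ᵀ e^{−iκ_p x̂·y} + (κ_s²/(4πω²)) (e^{iκ_s‖x‖}/‖x‖) (I − x̂x̂ᵀ) e^{−iκ_s x̂·y}`. -/
def farApprox (ω κp κs : ℝ) (y x : E3) (j k : Fin 3) : ℂ :=
  ((κp ^ 2 / (4 * π * ω ^ 2) : ℝ) : ℂ)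
      * (Complex.exp (Complex.I * (κp : ℂ) * (‖x‖ : ℂ)) / ((‖x‖ : ℝ) : ℂ))
      * ((((‖x‖⁻¹ • x : E3) j : ℝ) : ℂ) * (((‖x‖⁻¹ • x : E3) k : ℝ) : ℂ))
      * Complex.exp (-Complex.I * (κp : ℂ) * ((inner ℝ (‖x‖⁻¹ • x : E3) y : ℝ) : ℂ))
    + ((κs ^ 2 / (4 * π * ω ^ 2) : ℝ) : ℂ)
      * (Complex.exp (Complex.I * (κs : ℂ) * (‖x‖ : ℂ)) / ((‖x‖ : ℝ) : ℂ))
      * ((if j = k then 1 else 0)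
          - (((‖x‖⁻¹ • x : E3) j : ℝ) : ℂ) * (((‖x‖⁻¹ • x : E3) k : ℝ) : ℂ))
      * Complex.exp (-Complex.I * (κs : ℂ) * ((inner ℝ (‖x‖⁻¹ • x : E3) y : ℝ) : ℂ))

variable (y : E3)

lemma hasFDerivAt_nrm {x : E3} (hx : x ≠ y) :
    HasFDerivAt (fun z : E3 => ‖z - y‖) ((‖x - y‖)⁻¹ • (innerSL ℝ (x - y))) x := by
  have h0 : ‖x - y‖ ≠ 0 := norm_ne_zero_iff.mpr (sub_ne_zero.mpr hx)
  have hq : HasFDerivAt (fun z : E3 => (inner ℝ (z - y) (z - y) : ℝ))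
      ((2 : ℝ) • (innerSL ℝ (x - y))) x := by
    have h1 : HasFDerivAt (fun z : E3 => z - y) (ContinuousLinearMap.id ℝ E3) x :=
      (hasFDerivAt_id x).sub_const y
    have := h1.inner ℝ h1
    refine this.congr_fderiv (Eq.symm ?_)
    ext v
    simp [fderivInnerCLM, real_inner_comm, two_mul, Finset.sum_sub_distrib]
    rw [real_inner_comm (x - y) v, inner_sub_left]
  have hne : (inner ℝ (x - y) (x - y) : ℝ) ≠ 0 := by
    rw [real_inner_self_eq_norm_sq]
    exact pow_ne_zero 2 h0
  have hs := (Real.hasDerivAt_sqrt hne).comp_hasFDerivAt x hq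
  rw [show ((fun t => Real.sqrt t) ∘ fun z : E3 => (inner ℝ (z - y) (z - y) : ℝ))
      = (fun z : E3 => ‖z - y‖) from funext fun z => by
        rw [Function.comp_apply, real_inner_self_eq_norm_sq, Real.sqrt_sq (norm_nonneg _)]] at hs
  refine hs.congr_fderiv (Eq.symm ?_)
  rw [real_inner_self_eq_norm_sq, Real.sqrt_sq (norm_nonneg _)]
  ext v
  simp [ContinuousLinearMap.smul_apply]
  field_simp

/-- `G1 κ t = e^{iκt}(iκ/t² − 1/t³)`. -/
def G1 (κ t : ℝ) : ℂ :=
  Complex.exp (Complex.I * κ * t) * (Complex.I * κ * ((t:ℂ)⁻¹)^2 - ((t:ℂ)⁻¹)^3)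

/-- `G2 κ t = e^{iκt}(−κ²/t² − 3iκ/t³ + 3/t⁴)`. -/
def G2 (κ t : ℝ) : ℂ :=
  Complex.exp (Complex.I * κ * t) *
    (-(κ:ℂ)^2 * ((t:ℂ)⁻¹)^2 - 3 * Complex.I * κ * ((t:ℂ)⁻¹)^3 + 3 * ((t:ℂ)⁻¹)^4)

lemma hasDerivAt_F (κ : ℝ) {t : ℝ} (ht : t ≠ 0) :
    HasDerivAt (fun s : ℝ => Complex.exp (Complex.I * κ * s) / (s:ℂ))
      (Complex.exp (Complex.I * κ * t) * (Complex.I * κ * (t:ℂ)⁻¹ - ((t:ℂ)⁻¹)^2)) t := by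
  have htc : (t:ℂ) ≠ 0 := Complex.ofReal_ne_zero.mpr ht
  have hid : HasDerivAt (fun s : ℝ => ((s : ℝ) : ℂ)) 1 t := (hasDerivAt_id t).ofReal_comp
  have hexp : HasDerivAt (fun s : ℝ => Complex.exp (Complex.I * κ * s))
      (Complex.exp (Complex.I * κ * t) * (Complex.I * κ)) t := by
    have := ((hid.const_mul (Complex.I * κ)).cexp)
    simpa [mul_comm, mul_assoc, mul_left_comm] using this
  have hinv : HasDerivAt (fun s : ℝ => ((s:ℝ):ℂ)⁻¹) (-((t:ℂ)^2)⁻¹) t :=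
    (hasDerivAt_inv htc).comp_ofReal
  have hm : HasDerivAt (fun s : ℝ => Complex.exp (Complex.I * κ * s) * ((s:ℝ):ℂ)⁻¹)
      (Complex.exp (Complex.I * κ * t) * (Complex.I * κ) * (t:ℂ)⁻¹
        + Complex.exp (Complex.I * κ * t) * (-((t:ℂ)^2)⁻¹)) t := hexp.mul hinv
  have heq : (fun s : ℝ => Complex.exp (Complex.I * κ * s) * ((s:ℝ):ℂ)⁻¹)
      = fun s : ℝ => Complex.exp (Complex.I * κ * s) / (s:ℂ) := by
    funext s; rw [div_eq_mul_inv]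
  rw [heq] at hm
  convert hm using 1
  field_simp
  ring

lemma hasDerivAt_G1 (κ : ℝ) {t : ℝ} (ht : t ≠ 0) :
    HasDerivAt (G1 κ) (G2 κ t) t := by
  have htc : (t:ℂ) ≠ 0 := Complex.ofReal_ne_zero.mpr ht
  have hid : HasDerivAt (fun s : ℝ => ((s : ℝ) : ℂ)) 1 t := (hasDerivAt_id t).ofReal_comp
  have hexp : HasDerivAt (fun s : ℝ => Complex.exp (Complex.I * κ * s))
      (Complex.exp (Complex.I * κ * t) * (Complex.I * κ)) t := by
    have := ((hid.const_mul (Complex.I * κ)).cexp)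
    simpa [mul_comm, mul_assoc, mul_left_comm] using this
  have hinv : HasDerivAt (fun s : ℝ => ((s:ℝ):ℂ)⁻¹) (-((t:ℂ)^2)⁻¹) t :=
    (hasDerivAt_inv htc).comp_ofReal
  have hu2 : HasDerivAt (fun s : ℝ => ((s:ℝ):ℂ)⁻¹ * ((s:ℝ):ℂ)⁻¹)
      ((-((t:ℂ)^2)⁻¹) * (t:ℂ)⁻¹ + (t:ℂ)⁻¹ * (-((t:ℂ)^2)⁻¹)) t := hinv.mul hinv
  have hu3 : HasDerivAt (fun s : ℝ => ((s:ℝ):ℂ)⁻¹ * ((s:ℝ):ℂ)⁻¹ * ((s:ℝ):ℂ)⁻¹)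
      (((-((t:ℂ)^2)⁻¹) * (t:ℂ)⁻¹ + (t:ℂ)⁻¹ * (-((t:ℂ)^2)⁻¹)) * (t:ℂ)⁻¹
        + (t:ℂ)⁻¹ * (t:ℂ)⁻¹ * (-((t:ℂ)^2)⁻¹)) t := hu2.mul hinv
  have hpoly : HasDerivAt
      (fun s : ℝ => Complex.I * κ * (((s:ℝ):ℂ)⁻¹ * ((s:ℝ):ℂ)⁻¹)
        - ((s:ℝ):ℂ)⁻¹ * ((s:ℝ):ℂ)⁻¹ * ((s:ℝ):ℂ)⁻¹)
      (Complex.I * κ * ((-((t:ℂ)^2)⁻¹) * (t:ℂ)⁻¹ + (t:ℂ)⁻¹ * (-((t:ℂ)^2)⁻¹))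
        - (((-((t:ℂ)^2)⁻¹) * (t:ℂ)⁻¹ + (t:ℂ)⁻¹ * (-((t:ℂ)^2)⁻¹)) * (t:ℂ)⁻¹
          + (t:ℂ)⁻¹ * (t:ℂ)⁻¹ * (-((t:ℂ)^2)⁻¹))) t :=
    (hu2.const_mul (Complex.I * κ)).sub hu3
  have hm := hexp.fun_mul hpoly
  have heq : (fun s : ℝ => Complex.exp (Complex.I * κ * s) *
      (Complex.I * κ * (((s:ℝ):ℂ)⁻¹ * ((s:ℝ):ℂ)⁻¹)
        - ((s:ℝ):ℂ)⁻¹ * ((s:ℝ):ℂ)⁻¹ * ((s:ℝ):ℂ)⁻¹)) = G1 κ := by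
    funext s; unfold G1; ring
  rw [heq] at hm
  refine hm.congr_deriv (Eq.symm ?_)
  unfold G2
  rw [show ((t:ℂ)^2)⁻¹ = (t:ℂ)⁻¹ * (t:ℂ)⁻¹ by rw [sq, mul_inv]]
  ring_nf
  simp only [Complex.I_sq]
  ring

lemma hasFDerivAt_gker (κ : ℝ) {x : E3} (hx : x ≠ y) :
    HasFDerivAt (gker κ y)
      (((‖x - y‖ : ℝ)⁻¹ • (innerSL ℝ (x - y))).smulRight
        (Complex.exp (Complex.I * κ * ‖x - y‖)
          * (Complex.I * κ * ((‖x - y‖:ℝ):ℂ)⁻¹ - (((‖x - y‖:ℝ):ℂ)⁻¹)^2))) x := by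
  have h0 : ‖x - y‖ ≠ 0 := norm_ne_zero_iff.mpr (sub_ne_zero.mpr hx)
  have hc := ((hasDerivAt_F κ h0).hasFDerivAt).comp x (hasFDerivAt_nrm y hx)
  have heq : ((fun s : ℝ => Complex.exp (Complex.I * κ * s) / (s:ℂ)) ∘ fun z : E3 => ‖z - y‖)
      = gker κ y := rfl
  rw [heq] at hc
  exact hc

lemma pd_gker (κ : ℝ) {x : E3} (hx : x ≠ y) (k : Fin 3) :
    pd k (gker κ y) x = G1 κ ‖x - y‖ * (((x - y) k : ℝ) : ℂ) := by
  have h0 : ‖x - y‖ ≠ 0 := norm_ne_zero_iff.mpr (sub_ne_zero.mpr hx)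
  have hd := hasFDerivAt_gker y κ hx
  unfold pd
  rw [hd.fderiv]
  simp only [ContinuousLinearMap.smulRight_apply, ContinuousLinearMap.smul_apply,
    innerSL_apply_apply, smul_eq_mul]
  have hik : (inner ℝ (x - y) (e3 k) : ℝ) = (x - y) k := by
    simp [e3, EuclideanSpace.inner_single_right]
  rw [hik]
  unfold G1
  have : ((‖x - y‖:ℝ):ℂ) ≠ 0 := Complex.ofReal_ne_zero.mpr h0
  rw [Complex.real_smul]
  push_cast
  field_simp

def D1 (κ : ℝ) (y : E3) (k : Fin 3) : E3 → ℂ :=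
  fun z => G1 κ ‖z - y‖ * (((z - y) k : ℝ) : ℂ)

lemma hasFDerivAt_coord (k : Fin 3) (x : E3) :
    HasFDerivAt (fun z : E3 => (((z - y) k : ℝ) : ℂ))
      (Complex.ofRealCLM.comp (EuclideanSpace.proj k)) x := by
  have h := ((Complex.ofRealCLM.comp (EuclideanSpace.proj (𝕜 := ℝ) k)).hasFDerivAt
      (x := x)).sub_const (((y k : ℝ)) : ℂ)
  have heq : (fun z : E3 => (Complex.ofRealCLM.comp (EuclideanSpace.proj (𝕜 := ℝ) k)) z
      - (((y k : ℝ)) : ℂ)) = fun z : E3 => (((z - y) k : ℝ) : ℂ) := by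
    funext z
    simp [EuclideanSpace.proj]
  rwa [heq] at h

lemma hasFDerivAt_D1 (κ : ℝ) {x : E3} (hx : x ≠ y) (k : Fin 3) :
    HasFDerivAt (D1 κ y k)
      ((G1 κ ‖x - y‖) • (Complex.ofRealCLM.comp (EuclideanSpace.proj k))
        + (((x - y) k : ℝ) : ℂ) • ((ContinuousLinearMap.smulRight
            (1 : ℝ →L[ℝ] ℝ) (G2 κ ‖x - y‖)).comp ((‖x - y‖ : ℝ)⁻¹ • (innerSL ℝ (x - y))))) x := by
  have h0 : ‖x - y‖ ≠ 0 := norm_ne_zero_iff.mpr (sub_ne_zero.mpr hx)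
  have hGr : HasFDerivAt (fun z : E3 => G1 κ ‖z - y‖)
      ((ContinuousLinearMap.smulRight (1 : ℝ →L[ℝ] ℝ) (G2 κ ‖x - y‖)).comp
        ((‖x - y‖ : ℝ)⁻¹ • (innerSL ℝ (x - y)))) x :=
    by have := ((hasDerivAt_G1 κ h0).hasFDerivAt).comp x (hasFDerivAt_nrm y hx); exact this
  exact hGr.mul (hasFDerivAt_coord y k x)

lemma pd_D1 (κ : ℝ) {x : E3} (hx : x ≠ y) (j k : Fin 3) :
    pd j (D1 κ y k) x
      = G2 κ ‖x - y‖ * ((‖x - y‖ : ℝ) : ℂ)⁻¹ * (((x - y) j : ℝ) : ℂ) * (((x - y) k : ℝ) : ℂ)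
        + G1 κ ‖x - y‖ * (if j = k then 1 else 0) := by
  unfold pd
  rw [(hasFDerivAt_D1 y κ hx k).fderiv]
  have hik : ∀ i : Fin 3, (inner ℝ (x - y) (e3 i) : ℝ) = (x - y) i := by
    intro i; simp [e3, EuclideanSpace.inner_single_right]
  have hproj : (EuclideanSpace.proj (𝕜 := ℝ) k) (e3 j) = if j = k then (1:ℝ) else 0 := by
    simp [e3, EuclideanSpace.proj, EuclideanSpace.single_apply]
    by_cases h : j = k
    · simp [h]
    · simp [h, Ne.symm h]
  simp only [ContinuousLinearMap.add_apply, ContinuousLinearMap.smul_apply,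
    ContinuousLinearMap.comp_apply, ContinuousLinearMap.smulRight_apply,
    innerSL_apply_apply, hik, Complex.ofRealCLM_apply, hproj, smul_eq_mul,
    ContinuousLinearMap.one_apply]
  by_cases h : j = k <;> simp [h] <;> push_cast <;> ring

lemma pd_pd_gsub (κp κs : ℝ) {x : E3} (hx : x ≠ y) (j k : Fin 3) :
    pd j (pd k (fun z => gker κs y z - gker κp y z)) x
      = pd j (D1 κs y k) x - pd j (D1 κp y k) x := by
  have hEv : pd k (fun z => gker κs y z - gker κp y z)
      =ᶠ[nhds x] fun z => D1 κs y k z - D1 κp y k z := by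
    filter_upwards [isOpen_compl_singleton.mem_nhds hx] with z hz
    have hz' : z ≠ y := hz
    have h1 := hasFDerivAt_gker y κs hz'
    have h2 := hasFDerivAt_gker y κp hz'
    have hsplit : pd k (fun z => gker κs y z - gker κp y z) z
        = pd k (gker κs y) z - pd k (gker κp y) z := by
      unfold pd
      rw [fderiv_fun_sub h1.differentiableAt h2.differentiableAt]
      simp [ContinuousLinearMap.sub_apply]
    rw [hsplit, pd_gker y κs hz' k, pd_gker y κp hz' k]
    rfl
  have h1 := hasFDerivAt_D1 y κs hx k
  have h2 := hasFDerivAt_D1 y κp hx k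
  show fderiv ℝ (pd k fun z => gker κs y z - gker κp y z) x (e3 j) = _
  rw [hEv.fderiv_eq, fderiv_fun_sub h1.differentiableAt h2.differentiableAt]
  simp [ContinuousLinearMap.sub_apply, pd]

lemma abs_exp_I_mul (κ r : ℝ) :
    ‖Complex.exp (Complex.I * (κ:ℂ) * (r:ℂ))‖ = 1 := by
  rw [Complex.norm_exp]
  simp [Complex.mul_re]

lemma abs_exp_neg_I_mul (κ r : ℝ) :
    ‖Complex.exp (-Complex.I * (κ:ℂ) * (r:ℂ))‖ = 1 := by
  rw [Complex.norm_exp]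
  simp [Complex.mul_re]

lemma comp_le_norm (v : E3) (i : Fin 3) : |v i| ≤ ‖v‖ := by
  have h1 : (inner ℝ v (EuclideanSpace.single i (1:ℝ)) : ℝ) = v i := by
    simp [EuclideanSpace.inner_single_right]
  have h2 := abs_real_inner_le_norm v (EuclideanSpace.single i (1:ℝ))
  rw [h1] at h2
  simpa [EuclideanSpace.norm_single] using h2

lemma gE_bound (κ b r R t : ℝ) (hκ : 0 < κ) (hb : 0 ≤ b) (hR : 0 < R) (hr1 : 1 ≤ r)
    (hr2 : R ≤ 2 * r) (htb : |t| ≤ b) (hbR : b ≤ R / 2)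
    (hid : r ^ 2 - (R - t) ^ 2 = b ^ 2 - t ^ 2)
    (hsmall : κ * (b ^ 2 / r) ≤ 1)
    (hRr : |R - r| ≤ b) :
    ‖Complex.exp (Complex.I * (κ:ℂ) * (r:ℂ)) / (r:ℂ)
        - Complex.exp (Complex.I * (κ:ℂ) * (R:ℂ)) / (R:ℂ) * Complex.exp (-Complex.I * (κ:ℂ) * (t:ℂ))‖
      ≤ (8 * κ * b ^ 2 + 2 * b) / R ^ 2 := by
  have hr0 : (0:ℝ) < r := lt_of_lt_of_le one_pos hr1
  have hrc : ((r:ℝ):ℂ) ≠ 0 := Complex.ofReal_ne_zero.mpr (ne_of_gt hr0)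
  have hRc : ((R:ℝ):ℂ) ≠ 0 := Complex.ofReal_ne_zero.mpr (ne_of_gt hR)
  set s : ℝ := R - t with hs
  have hs0 : 0 < s := by
    have : t ≤ b := (abs_le.mp htb).2
    have : t ≤ R / 2 := le_trans this hbR
    simp only [hs]; linarith
  -- merge the two exponentials
  have hmerge : Complex.exp (Complex.I * (κ:ℂ) * (R:ℂ)) / (R:ℂ)
      * Complex.exp (-Complex.I * (κ:ℂ) * (t:ℂ))
      = Complex.exp (Complex.I * (κ:ℂ) * (s:ℂ)) / (R:ℂ) := by
    rw [div_mul_eq_mul_div, ← Complex.exp_add]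
    congr 2
    push_cast [hs]
    ring
  rw [hmerge]
  -- |r - s| ≤ b^2 / r
  have hfac : (r - s) * (r + s) = b ^ 2 - t ^ 2 := by nlinarith [hid]
  have hnum0 : 0 ≤ b ^ 2 - t ^ 2 := by
    nlinarith [abs_le.mp htb, abs_nonneg t, neg_abs_le t, le_abs_self t]
  have hrsum : 0 < r + s := by linarith
  have hrs0 : 0 ≤ r - s := by nlinarith
  have hrs : |r - s| ≤ b ^ 2 / r := by
    rw [abs_of_nonneg hrs0, le_div_iff₀ hr0]
    nlinarith [sq_nonneg t]
  -- split
  have hsplit : Complex.exp (Complex.I * (κ:ℂ) * (r:ℂ)) / (r:ℂ)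
      - Complex.exp (Complex.I * (κ:ℂ) * (s:ℂ)) / (R:ℂ)
      = (Complex.exp (Complex.I * (κ:ℂ) * (r:ℂ)) - Complex.exp (Complex.I * (κ:ℂ) * (s:ℂ)))
          * ((r:ℝ):ℂ)⁻¹
        + Complex.exp (Complex.I * (κ:ℂ) * (s:ℂ)) * (((r:ℝ):ℂ)⁻¹ - ((R:ℝ):ℂ)⁻¹) := by
    field_simp
    ring
  rw [hsplit]
  have hexpdiff : ‖Complex.exp (Complex.I * (κ:ℂ) * (r:ℂ))
      - Complex.exp (Complex.I * (κ:ℂ) * (s:ℂ))‖ ≤ 2 * (κ * |r - s|) := by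
    have hfact : Complex.exp (Complex.I * (κ:ℂ) * (r:ℂ))
        - Complex.exp (Complex.I * (κ:ℂ) * (s:ℂ))
        = Complex.exp (Complex.I * (κ:ℂ) * (s:ℂ))
          * (Complex.exp (Complex.I * (κ:ℂ) * ((r - s : ℝ):ℂ)) - 1) := by
      rw [mul_sub, mul_one, ← Complex.exp_add]
      congr 2
      push_cast
      ring
    rw [hfact, norm_mul, abs_exp_I_mul, one_mul]
    have habsarg : ‖Complex.I * (κ:ℂ) * ((r - s : ℝ):ℂ)‖ = κ * |r - s| := by
      rw [norm_mul, norm_mul, Complex.norm_I, Complex.norm_real, Real.norm_eq_abs, Complex.norm_real, Real.norm_eq_abs,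
        one_mul, abs_of_pos hκ]
    have harg1 : ‖Complex.I * (κ:ℂ) * ((r - s : ℝ):ℂ)‖ ≤ 1 := by
      rw [habsarg]
      calc κ * |r - s| ≤ κ * (b ^ 2 / r) := by
            exact mul_le_mul_of_nonneg_left hrs (le_of_lt hκ)
        _ ≤ 1 := hsmall
    have := Complex.norm_exp_sub_one_le harg1
    rwa [habsarg] at this
  have hinvr : (0:ℝ) < r⁻¹ := inv_pos.mpr hr0
  have hinvle : r⁻¹ ≤ 2 / R := by
    rw [show r⁻¹ = 1/r from (one_div r).symm, div_le_div_iff₀ hr0 hR]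
    linarith
  calc ‖_‖ ≤ ‖(Complex.exp (Complex.I * (κ:ℂ) * (r:ℂ))
        - Complex.exp (Complex.I * (κ:ℂ) * (s:ℂ))) * ((r:ℝ):ℂ)⁻¹‖
        + ‖Complex.exp (Complex.I * (κ:ℂ) * (s:ℂ))
          * (((r:ℝ):ℂ)⁻¹ - ((R:ℝ):ℂ)⁻¹)‖ := norm_add_le _ _
    _ = ‖Complex.exp (Complex.I * (κ:ℂ) * (r:ℂ))
        - Complex.exp (Complex.I * (κ:ℂ) * (s:ℂ))‖ * r⁻¹ + |r⁻¹ - R⁻¹| := by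
        rw [norm_mul, norm_mul, abs_exp_I_mul, one_mul]
        congr 2
        · rw [norm_inv, Complex.norm_real, Real.norm_eq_abs, abs_of_pos hr0]
        · rw [show (((r:ℝ):ℂ)⁻¹ - ((R:ℝ):ℂ)⁻¹) = (((r⁻¹ - R⁻¹ : ℝ)):ℂ) by push_cast; ring]
          exact Complex.norm_real _
    _ ≤ (2 * (κ * (b ^ 2 / r))) * r⁻¹ + b / (r * R) := by
        have h1 : ‖Complex.exp (Complex.I * (κ:ℂ) * (r:ℂ))
            - Complex.exp (Complex.I * (κ:ℂ) * (s:ℂ))‖ * r⁻¹ ≤ (2 * (κ * (b ^ 2 / r))) * r⁻¹ := by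
          apply mul_le_mul_of_nonneg_right _ (le_of_lt hinvr)
          calc ‖_‖ ≤ 2 * (κ * |r - s|) := hexpdiff
            _ ≤ 2 * (κ * (b ^ 2 / r)) := by
                have := mul_le_mul_of_nonneg_left hrs (le_of_lt hκ)
                linarith
        have h2 : |r⁻¹ - R⁻¹| ≤ b / (r * R) := by
          rw [show r⁻¹ - R⁻¹ = (R - r) / (r * R) by field_simp, abs_div,
            abs_of_pos (by positivity : (0:ℝ) < r * R)]
          gcongr
        linarith
    _ = 2 * κ * b ^ 2 * (r⁻¹ * r⁻¹) + b * (r⁻¹ * R⁻¹) := by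
        rw [div_eq_mul_inv, div_eq_mul_inv, mul_inv]
        ring
    _ ≤ 2 * κ * b ^ 2 * ((2 / R) * (2 / R)) + b * ((2 / R) * R⁻¹) := by
        gcongr
    _ = (8 * κ * b ^ 2 + 2 * b) / R ^ 2 := by
        field_simp
        ring

lemma prod_bound (g E Nj Nk Xj Xk : ℂ) (d e f : ℝ)
    (hg : ‖g - E‖ ≤ d) (hE : ‖E‖ ≤ e)
    (hNj : ‖Nj‖ ≤ 1) (hNk : ‖Nk‖ ≤ 1)
    (hXj : ‖Xj‖ ≤ 1) (hXk : ‖Xk‖ ≤ 1)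
    (hdj : ‖Nj - Xj‖ ≤ f) (hdk : ‖Nk - Xk‖ ≤ f)
    (he : 0 ≤ e) (hf : 0 ≤ f) :
    ‖g * Nj * Nk - E * Xj * Xk‖ ≤ d + 2 * (e * f) := by
  have hdec : g * Nj * Nk - E * Xj * Xk
      = (g - E) * Nj * Nk + E * Nk * (Nj - Xj) + E * Xj * (Nk - Xk) := by ring
  rw [hdec]
  have h0 : 0 ≤ d := le_trans (norm_nonneg _) hg
  calc ‖_‖
      ≤ ‖(g - E) * Nj * Nk + E * Nk * (Nj - Xj)‖
        + ‖E * Xj * (Nk - Xk)‖ := norm_add_le _ _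
    _ ≤ ‖(g - E) * Nj * Nk‖ + ‖E * Nk * (Nj - Xj)‖
        + ‖E * Xj * (Nk - Xk)‖ := by
        have := norm_add_le ((g - E) * Nj * Nk) (E * Nk * (Nj - Xj))
        linarith
    _ ≤ d + (e * f) + (e * f) := by
        have hA : ‖(g - E) * Nj * Nk‖ ≤ d := by
          rw [norm_mul, norm_mul]
          have := mul_le_mul (mul_le_mul hg hNj (norm_nonneg _) h0) hNk
            (norm_nonneg _) (by positivity)
          simpa using this
        have hB : ‖E * Nk * (Nj - Xj)‖ ≤ e * f := by
          rw [norm_mul, norm_mul]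
          have := mul_le_mul (mul_le_mul hE hNk (norm_nonneg _) he) hdj
            (norm_nonneg _) (by positivity)
          simpa using this
        have hC : ‖E * Xj * (Nk - Xk)‖ ≤ e * f := by
          rw [norm_mul, norm_mul]
          have := mul_le_mul (mul_le_mul hE hXj (norm_nonneg _) he) hdk
            (norm_nonneg _) (by positivity)
          simpa using this
        linarith
    _ = d + 2 * (e * f) := by ring

lemma B_bound (κ ru : ℝ) (u Nj Nk δ : ℂ) (hκ : 0 < κ) (hru0 : 0 ≤ ru)
    (hu : ‖u‖ ≤ ru) (hru1 : ru ≤ 1)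
    (hNj : ‖Nj‖ ≤ 1) (hNk : ‖Nk‖ ≤ 1) (hδ : ‖δ‖ ≤ 1) :
    ‖(-3 * Complex.I * (κ:ℂ) * u^2 + 3 * u^3) * Nj * Nk
      + (Complex.I * (κ:ℂ) * u^2 - u^3) * δ‖ ≤ (4 * κ + 4) * ru ^ 2 := by
  have hu2 : ‖u ^ 2‖ ≤ ru ^ 2 := by
    rw [norm_pow]
    exact pow_le_pow_left₀ (norm_nonneg u) hu 2
  have hu3 : ‖u ^ 3‖ ≤ ru ^ 2 := by
    rw [norm_pow]
    calc ‖u‖ ^ 3 ≤ ru ^ 3 := pow_le_pow_left₀ (norm_nonneg u) hu 3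
      _ ≤ ru ^ 2 := by nlinarith
  have h3 : ‖(3 : ℂ)‖ = 3 := by norm_num
  have hA : ‖-3 * Complex.I * (κ:ℂ) * u^2 + 3 * u^3‖ ≤ 3 * κ * ru^2 + 3 * ru^2 := by
    calc ‖_‖ ≤ ‖-3 * Complex.I * (κ:ℂ) * u^2‖
          + ‖3 * u^3‖ := norm_add_le _ _
      _ ≤ 3 * κ * ru^2 + 3 * ru^2 := by
          simp only [norm_mul, Complex.norm_I, Complex.norm_real, Real.norm_eq_abs, h3]
          have h1 : ‖(-3 : ℂ)‖ = 3 := by norm_num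
          rw [h1, abs_of_pos hκ]
          nlinarith [norm_nonneg (u^2), norm_nonneg (u^3)]
  have hB : ‖Complex.I * (κ:ℂ) * u^2 - u^3‖ ≤ κ * ru^2 + ru^2 := by
    calc ‖_‖ ≤ ‖Complex.I * (κ:ℂ) * u^2‖
          + ‖u^3‖ := by
            have := norm_add_le (Complex.I * (κ:ℂ) * u^2) (-(u^3))
            simpa [sub_eq_add_neg] using this
      _ ≤ κ * ru^2 + ru^2 := by
          simp only [norm_mul, Complex.norm_I, Complex.norm_real, Real.norm_eq_abs, one_mul, abs_of_pos hκ]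
          nlinarith [norm_nonneg (u^2)]
  calc ‖_‖ ≤ ‖(-3 * Complex.I * (κ:ℂ) * u^2 + 3 * u^3) * Nj * Nk‖
        + ‖(Complex.I * (κ:ℂ) * u^2 - u^3) * δ‖ := norm_add_le _ _
    _ ≤ (3 * κ * ru^2 + 3 * ru^2) * 1 * 1 + (κ * ru^2 + ru^2) * 1 := by
        rw [norm_mul, norm_mul, norm_mul]
        have hn2 : (0:ℝ) ≤ 3 * κ * ru^2 + 3 * ru^2 := by positivity
        have hn3 : (0:ℝ) ≤ κ * ru^2 + ru^2 := by positivity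
        have t1 := mul_le_mul (mul_le_mul hA hNj (norm_nonneg _) hn2) hNk
          (norm_nonneg _) (by positivity)
        have t2 := mul_le_mul hB hδ (norm_nonneg _) hn3
        linarith
    _ ≤ (4 * κ + 4) * ru ^ 2 := by nlinarith

set_option maxHeartbeats 2000000 in
/-- Asymptotics of the fundamental solution: every entry of `Φ(x,y)` minus its far-field
approximation is `O(1/‖x‖²)` as `‖x‖ → ∞`. -/
theorem stmt_13 (ω κp κs : ℝ) (hω : 0 < ω) (hκp : 0 < κp) (hκs : 0 < κs) (y : E3) :
    ∃ C > (0 : ℝ), ∃ R₀ > (0 : ℝ), ∀ x : E3, R₀ ≤ ‖x‖ → ∀ j k : Fin 3,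
      ‖PhiMat ω κp κs y x j k - farApprox ω κp κs y x j k‖ ≤ C / ‖x‖ ^ 2 := by
  have hπ : (0:ℝ) < π := Real.pi_pos
  set b : ℝ := ‖y‖ with hbdef
  have hb : 0 ≤ b := norm_nonneg y
  set c0 : ℝ := 1 / (4 * π * ω ^ 2) with hc0
  have hc0pos : 0 < c0 := by positivity
  set a1 : ℝ := κs^2 * (8*κs*b^2 + 2*b) with ha1
  set a2 : ℝ := κs^2 * (8*κs*b^2 + 2*b + 4*b) with ha2
  set a3 : ℝ := κp^2 * (8*κp*b^2 + 2*b + 4*b) with ha3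
  set a4 : ℝ := 16*(κs+κp) + 32 with ha4
  have ha1p : 0 ≤ a1 := by positivity
  have ha2p : 0 ≤ a2 := by positivity
  have ha3p : 0 ≤ a3 := by positivity
  have ha4p : 0 ≤ a4 := by positivity
  refine ⟨c0 * (a1+a2+a3+a4) + 1, by positivity,
    2*b + 2 + 2*(κp+κs)*b^2, by positivity, ?_⟩
  intro x hRx j k
  set R : ℝ := ‖x‖ with hRdef
  set r : ℝ := ‖x - y‖ with hrdef
  have hR2 : 2 ≤ R := by nlinarith
  have hR0 : (0:ℝ) < R := by linarith
  have hbR : 2*b + 2 ≤ R := by nlinarith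
  have hRr : |R - r| ≤ b := by
    have := abs_norm_sub_norm_le x (x - y)
    simpa [hRdef, hrdef] using this
  have hr1 : 1 ≤ r := by
    have := abs_le.mp hRr
    linarith
  have hr0 : (0:ℝ) < r := by linarith
  have hr2 : R ≤ 2*r := by
    have := abs_le.mp hRr
    linarith
  have hxy : x ≠ y := by
    intro h
    rw [hrdef, h] at hr1
    simp at hr1
    linarith
  have hbhalf : b ≤ R / 2 := by linarith
  set t : ℝ := (inner ℝ ((‖x‖)⁻¹ • x : E3) y : ℝ) with htdef
  have hxyin : (inner ℝ x y : ℝ) = R * t := by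
    rw [htdef, real_inner_smul_left]
    field_simp
    exact (mul_div_cancel_right₀ _ (ne_of_gt hR0)).symm
  have htb : |t| ≤ b := by
    have h1 := abs_real_inner_le_norm x y
    rw [hxyin, abs_mul, abs_of_pos hR0] at h1
    exact le_of_mul_le_mul_left h1 hR0
  have hid : r ^ 2 - (R - t) ^ 2 = b ^ 2 - t ^ 2 := by
    have hn : r ^ 2 = R ^ 2 - 2 * (inner ℝ x y : ℝ) + b ^ 2 := by
      rw [hrdef, hRdef, hbdef, @norm_sub_sq_real]
    rw [hn, hxyin]
    ring
  have hsmall_s : κs * (b ^ 2 / r) ≤ 1 := by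
    rw [mul_div_assoc', div_le_one hr0]
    nlinarith
  have hsmall_p : κp * (b ^ 2 / r) ≤ 1 := by
    rw [mul_div_assoc', div_le_one hr0]
    nlinarith
  have hgs := gE_bound κs b r R t hκs hb hR0 hr1 hr2 htb hbhalf hid hsmall_s hRr
  have hgp := gE_bound κp b r R t hκp hb hR0 hr1 hr2 htb hbhalf hid hsmall_p hRr
  -- complex quantities
  set u : ℂ := ((r:ℝ):ℂ)⁻¹ with hu
  set δC : ℂ := (if j = k then (1:ℂ) else 0) with hδ
  set es : ℂ := Complex.exp (Complex.I * (κs:ℂ) * ((r:ℝ):ℂ)) with hes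
  set ep : ℂ := Complex.exp (Complex.I * (κp:ℂ) * ((r:ℝ):ℂ)) with hep
  set gsC : ℂ := es / ((r:ℝ):ℂ) with hgsC
  set gpC : ℂ := ep / ((r:ℝ):ℂ) with hgpC
  set EsC : ℂ := Complex.exp (Complex.I * (κs:ℂ) * ((R:ℝ):ℂ)) / ((R:ℝ):ℂ)
    * Complex.exp (-Complex.I * (κs:ℂ) * ((t:ℝ):ℂ)) with hEsC
  set EpC : ℂ := Complex.exp (Complex.I * (κp:ℂ) * ((R:ℝ):ℂ)) / ((R:ℝ):ℂ)
    * Complex.exp (-Complex.I * (κp:ℂ) * ((t:ℝ):ℂ)) with hEpC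
  set Nj : ℂ := (((x - y) j : ℝ):ℂ) * u with hNjdef
  set Nk : ℂ := (((x - y) k : ℝ):ℂ) * u with hNkdef
  set Xj : ℂ := (((‖x‖⁻¹ • x : E3) j : ℝ):ℂ) with hXjdef
  set Xk : ℂ := (((‖x‖⁻¹ • x : E3) k : ℝ):ℂ) with hXkdef
  -- bounds on the pieces
  have habsu : ‖u‖ = r⁻¹ := by
    rw [hu, norm_inv, Complex.norm_real, Real.norm_eq_abs, abs_of_pos hr0]
  have hUle : r⁻¹ ≤ 2 / R := by
    rw [show r⁻¹ = 1/r from (one_div r).symm, div_le_div_iff₀ hr0 hR0]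
    linarith
  have hcomp : ∀ i : Fin 3, |(x - y) i| ≤ r := fun i => comp_le_norm (x - y) i
  have hNabs : ∀ i : Fin 3, ‖(((x - y) i : ℝ):ℂ) * u‖ ≤ 1 := by
    intro i
    rw [norm_mul, Complex.norm_real, Real.norm_eq_abs, habsu]
    rw [show (1:ℝ) = r * r⁻¹ by field_simp]
    exact mul_le_mul_of_nonneg_right (hcomp i) (le_of_lt (inv_pos.mpr hr0))
  have hNj1 : ‖Nj‖ ≤ 1 := hNabs j
  have hNk1 : ‖Nk‖ ≤ 1 := hNabs k
  have hxhat : ∀ i : Fin 3, ((‖x‖⁻¹ • x : E3) i : ℝ) = R⁻¹ * x i := by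
    intro i
    simp [hRdef]
  have hXabs : ∀ i : Fin 3, ‖(((‖x‖⁻¹ • x : E3) i : ℝ):ℂ)‖ ≤ 1 := by
    intro i
    rw [Complex.norm_real, Real.norm_eq_abs, hxhat i, abs_mul, abs_of_pos (inv_pos.mpr hR0)]
    rw [show (1:ℝ) = R⁻¹ * R by field_simp]
    exact mul_le_mul_of_nonneg_left (comp_le_norm x i) (le_of_lt (inv_pos.mpr hR0))
  have hXj1 : ‖Xj‖ ≤ 1 := hXabs j
  have hXk1 : ‖Xk‖ ≤ 1 := hXabs k
  have hinvdiff : |r⁻¹ - R⁻¹| ≤ b / (r * R) := by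
    rw [show r⁻¹ - R⁻¹ = (R - r) / (r * R) by field_simp, abs_div,
      abs_of_pos (by positivity : (0:ℝ) < r * R)]
    gcongr
  have hNX : ∀ i : Fin 3, ‖(((x - y) i : ℝ):ℂ) * u - (((‖x‖⁻¹ • x : E3) i : ℝ):ℂ)‖
      ≤ 2 * b / R := by
    intro i
    have hre : (((x - y) i : ℝ):ℂ) * u - (((‖x‖⁻¹ • x : E3) i : ℝ):ℂ)
        = (((x - y) i * r⁻¹ - (‖x‖⁻¹ • x : E3) i : ℝ) : ℂ) := by
      rw [hu]; push_cast; ring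
    rw [hre, Complex.norm_real, Real.norm_eq_abs]
    have hsubc : (x - y) i - x i = -(y i) := by
      have : (x - y) i = x i - y i := by simp
      rw [this]; ring
    have hyc : |y i| ≤ b := comp_le_norm y i
    have hdecomp : (x - y) i * r⁻¹ - (‖x‖⁻¹ • x : E3) i
        = (x - y) i * (r⁻¹ - R⁻¹) + ((x - y) i - x i) * R⁻¹ := by
      rw [hxhat i]; ring
    rw [hdecomp, hsubc]
    calc |(x - y) i * (r⁻¹ - R⁻¹) + -(y i) * R⁻¹|
        ≤ |(x - y) i * (r⁻¹ - R⁻¹)| + |(-(y i)) * R⁻¹| := abs_add_le _ _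
      _ ≤ r * (b / (r * R)) + b * R⁻¹ := by
          rw [abs_mul, abs_mul, abs_neg, abs_of_pos (inv_pos.mpr hR0)]
          have h1 := mul_le_mul (hcomp i) hinvdiff (abs_nonneg _) (le_of_lt hr0)
          have h2 := mul_le_mul_of_nonneg_right hyc (le_of_lt (inv_pos.mpr hR0))
          linarith
      _ = 2 * b / R := by field_simp; ring
  have hNXj : ‖Nj - Xj‖ ≤ 2 * b / R := hNX j
  have hNXk : ‖Nk - Xk‖ ≤ 2 * b / R := hNX k
  have hEabs : ∀ κ : ℝ, ‖Complex.exp (Complex.I * (κ:ℂ) * ((R:ℝ):ℂ)) / ((R:ℝ):ℂ)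
      * Complex.exp (-Complex.I * (κ:ℂ) * ((t:ℝ):ℂ))‖ ≤ 1 / R := by
    intro κ
    rw [norm_mul, norm_div, abs_exp_I_mul, abs_exp_neg_I_mul, Complex.norm_real, Real.norm_eq_abs,
      abs_of_pos hR0, mul_one]
  have hδ1 : ‖δC‖ ≤ 1 := by
    rw [hδ]; by_cases h : j = k <;> simp [h]
  -- the four term bounds
  have hT1 : ‖(κs:ℂ)^2 * (gsC - EsC) * δC‖ ≤ a1 / R^2 := by
    rw [norm_mul, norm_mul, norm_pow, Complex.norm_real, Real.norm_eq_abs, abs_of_pos hκs]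
    have := hgs
    calc κs^2 * ‖gsC - EsC‖ * ‖δC‖
        ≤ κs^2 * ((8*κs*b^2 + 2*b) / R^2) * 1 := by
          apply mul_le_mul _ hδ1 (norm_nonneg _) (by positivity)
          exact mul_le_mul_of_nonneg_left this (by positivity)
      _ = a1 / R^2 := by rw [ha1]; ring
  have hP2 : ‖gsC * Nj * Nk - EsC * Xj * Xk‖
      ≤ (8*κs*b^2 + 2*b) / R^2 + 2 * ((1/R) * (2*b/R)) := by
    apply prod_bound _ _ _ _ _ _ _ _ _
      hgs (hEabs κs) hNj1 hNk1 hXj1 hXk1 hNXj hNXk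
      (by positivity) (by positivity)
  have hP3 : ‖gpC * Nj * Nk - EpC * Xj * Xk‖
      ≤ (8*κp*b^2 + 2*b) / R^2 + 2 * ((1/R) * (2*b/R)) := by
    apply prod_bound _ _ _ _ _ _ _ _ _
      hgp (hEabs κp) hNj1 hNk1 hXj1 hXk1 hNXj hNXk
      (by positivity) (by positivity)
  have hT2 : ‖-(κs:ℂ)^2 * (gsC * Nj * Nk - EsC * Xj * Xk)‖ ≤ a2 / R^2 := by
    rw [show -(κs:ℂ)^2 * (gsC * Nj * Nk - EsC * Xj * Xk)
        = -((κs:ℂ)^2 * (gsC * Nj * Nk - EsC * Xj * Xk)) by ring,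
      norm_neg, norm_mul, norm_pow, Complex.norm_real, Real.norm_eq_abs, abs_of_pos hκs]
    calc κs^2 * ‖gsC * Nj * Nk - EsC * Xj * Xk‖
        ≤ κs^2 * ((8*κs*b^2 + 2*b) / R^2 + 2 * ((1/R) * (2*b/R))) :=
          mul_le_mul_of_nonneg_left hP2 (by positivity)
      _ = a2 / R^2 := by rw [ha2]; field_simp; ring
  have hT3 : ‖(κp:ℂ)^2 * (gpC * Nj * Nk - EpC * Xj * Xk)‖ ≤ a3 / R^2 := by
    rw [norm_mul, norm_pow, Complex.norm_real, Real.norm_eq_abs, abs_of_pos hκp]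
    calc κp^2 * ‖gpC * Nj * Nk - EpC * Xj * Xk‖
        ≤ κp^2 * ((8*κp*b^2 + 2*b) / R^2 + 2 * ((1/R) * (2*b/R))) :=
          mul_le_mul_of_nonneg_left hP3 (by positivity)
      _ = a3 / R^2 := by rw [ha3]; field_simp; ring
  have hBs := B_bound κs (2/R) u Nj Nk δC hκs (by positivity)
    (by rw [habsu]; exact hUle) (by rw [div_le_one hR0]; linarith) hNj1 hNk1 hδ1
  have hBp := B_bound κp (2/R) u Nj Nk δC hκp (by positivity)
    (by rw [habsu]; exact hUle) (by rw [div_le_one hR0]; linarith) hNj1 hNk1 hδ1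
  have hT4 : ‖es * ((-3 * Complex.I * (κs:ℂ) * u^2 + 3 * u^3) * Nj * Nk
        + (Complex.I * (κs:ℂ) * u^2 - u^3) * δC)
      - ep * ((-3 * Complex.I * (κp:ℂ) * u^2 + 3 * u^3) * Nj * Nk
        + (Complex.I * (κp:ℂ) * u^2 - u^3) * δC)‖ ≤ a4 / R^2 := by
    have hes1 : ‖es‖ = 1 := by rw [hes]; exact abs_exp_I_mul κs r
    have hep1 : ‖ep‖ = 1 := by rw [hep]; exact abs_exp_I_mul κp r
    calc ‖_‖
        ≤ ‖es * ((-3 * Complex.I * (κs:ℂ) * u^2 + 3 * u^3) * Nj * Nk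
            + (Complex.I * (κs:ℂ) * u^2 - u^3) * δC)‖
          + ‖ep * ((-3 * Complex.I * (κp:ℂ) * u^2 + 3 * u^3) * Nj * Nk
            + (Complex.I * (κp:ℂ) * u^2 - u^3) * δC)‖ := by
          have := norm_add_le
            (es * ((-3 * Complex.I * (κs:ℂ) * u^2 + 3 * u^3) * Nj * Nk
              + (Complex.I * (κs:ℂ) * u^2 - u^3) * δC))
            (-(ep * ((-3 * Complex.I * (κp:ℂ) * u^2 + 3 * u^3) * Nj * Nk
              + (Complex.I * (κp:ℂ) * u^2 - u^3) * δC)))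
          simpa [sub_eq_add_neg] using this
      _ ≤ (4*κs+4) * (2/R)^2 + (4*κp+4) * (2/R)^2 := by
          rw [norm_mul, norm_mul, hes1, hep1, one_mul, one_mul]
          exact add_le_add hBs hBp
      _ = a4 / R^2 := by rw [ha4]; field_simp; ring
  -- the exact algebraic identity
  have hkey : PhiMat ω κp κs y x j k - farApprox ω κp κs y x j k
      = ((c0:ℝ):ℂ) * ((κs:ℂ)^2 * (gsC - EsC) * δC
        + (-(κs:ℂ)^2 * (gsC * Nj * Nk - EsC * Xj * Xk))
        + (κp:ℂ)^2 * (gpC * Nj * Nk - EpC * Xj * Xk)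
        + (es * ((-3 * Complex.I * (κs:ℂ) * u^2 + 3 * u^3) * Nj * Nk
            + (Complex.I * (κs:ℂ) * u^2 - u^3) * δC)
          - ep * ((-3 * Complex.I * (κp:ℂ) * u^2 + 3 * u^3) * Nj * Nk
            + (Complex.I * (κp:ℂ) * u^2 - u^3) * δC))) := by
    unfold PhiMat farApprox
    rw [pd_pd_gsub y κp κs hxy j k, pd_D1 y κs hxy j k, pd_D1 y κp hxy j k]
    unfold gker G1 G2
    simp only [hgsC, hgpC, hEsC, hEpC, hNjdef, hNkdef, hXjdef, hXkdef, hes, hep, hu, hδ,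
      hc0, hrdef, hRdef, htdef]
    push_cast
    ring
  rw [hkey]
  rw [norm_mul, Complex.norm_real, Real.norm_eq_abs, abs_of_pos hc0pos]
  calc c0 * ‖_‖
      ≤ c0 * (a1 / R^2 + a2 / R^2 + a3 / R^2 + a4 / R^2) := by
        apply mul_le_mul_of_nonneg_left _ (le_of_lt hc0pos)
        calc ‖_‖
            ≤ ‖(κs:ℂ)^2 * (gsC - EsC) * δC
                + (-(κs:ℂ)^2 * (gsC * Nj * Nk - EsC * Xj * Xk))
                + (κp:ℂ)^2 * (gpC * Nj * Nk - EpC * Xj * Xk)‖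
              + ‖es * ((-3 * Complex.I * (κs:ℂ) * u^2 + 3 * u^3) * Nj * Nk
                  + (Complex.I * (κs:ℂ) * u^2 - u^3) * δC)
                - ep * ((-3 * Complex.I * (κp:ℂ) * u^2 + 3 * u^3) * Nj * Nk
                  + (Complex.I * (κp:ℂ) * u^2 - u^3) * δC)‖ := norm_add_le _ _
          _ ≤ a1 / R^2 + a2 / R^2 + a3 / R^2 + a4 / R^2 := by
              have t12 := norm_add_le ((κs:ℂ)^2 * (gsC - EsC) * δC)
                (-(κs:ℂ)^2 * (gsC * Nj * Nk - EsC * Xj * Xk))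
              have t123 := norm_add_le ((κs:ℂ)^2 * (gsC - EsC) * δC
                + (-(κs:ℂ)^2 * (gsC * Nj * Nk - EsC * Xj * Xk)))
                ((κp:ℂ)^2 * (gpC * Nj * Nk - EpC * Xj * Xk))
              linarith
    _ ≤ (c0 * (a1+a2+a3+a4) + 1) / R^2 := by
        rw [← add_div, ← add_div, ← add_div, mul_div_assoc']
        gcongr
        linarith
  done
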